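/- Let s > 1/2. There is a constant c > 0, depending only on s, such that for all m ∈ ℤ and all M ∈ ℕ: (a) Σ_{n∈ℤ} ⟨n⟩^{−(2s+1)}⟨m−n⟩^{−1} ≤ c·⟨m⟩^{−1}; and (b) Σ_{n∈ℤ, |n|≥M} ⟨n⟩^{−(2s+1)}⟨m−n⟩^{−1} ≤ c·⟨m⟩^{−1}·( 1_{{|m| ≥ 2M/3}} + ⟨M⟩^{−2s} ). -/

import Mathlib

set_option maxHeartbeats 1000000

/-- The Japanese bracket `⟨n⟩ = (1+n²)^{1/2}` of an integer. -/
noncomputable def jap (n : ℤ) : ℝ := Real.sqrt (1 + (n : ℝ) ^ 2)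

lemma jap_one_le (n : ℤ) : 1 ≤ jap n := by
  have h := Real.sqrt_le_sqrt (show (1:ℝ) ≤ 1 + (n:ℝ)^2 by nlinarith [sq_nonneg ((n:ℝ))])
  simpa [jap] using h

lemma jap_pos (n : ℤ) : 0 < jap n := lt_of_lt_of_le one_pos (jap_one_le n)

lemma abs_le_jap (n : ℤ) : |(n:ℝ)| ≤ jap n := by
  rw [jap, ← Real.sqrt_sq_eq_abs]
  exact Real.sqrt_le_sqrt (by nlinarith)

lemma jap_mono {a b : ℤ} (h : |(a:ℝ)| ≤ |(b:ℝ)|) : jap a ≤ jap b := by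
  apply Real.sqrt_le_sqrt
  have := abs_nonneg (a:ℝ)
  nlinarith [sq_abs (a:ℝ), sq_abs (b:ℝ)]

lemma peetre (m n : ℤ) : jap m ≤ Real.sqrt 2 * (jap n * jap (m - n)) := by
  rw [jap, jap, jap, ← Real.sqrt_mul (by positivity), ← Real.sqrt_mul (by norm_num)]
  apply Real.sqrt_le_sqrt
  push_cast
  nlinarith [sq_nonneg ((m:ℝ) - 2*n), sq_nonneg ((n:ℝ)*((m:ℝ)-(n:ℝ))), sq_nonneg ((m:ℝ)-(n:ℝ))]

lemma jap_summable {r : ℝ} (hr : 1 < r) : Summable (fun n : ℤ => jap n ^ (-r)) := by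
  have hg : Summable (fun n : ℤ => |(n:ℝ)| ^ (-r) + if n = 0 then (1:ℝ) else 0) :=
    (Real.summable_abs_int_rpow hr).add
      (summable_of_ne_finset_zero (s := {0}) (fun n hn => if_neg (by simpa using hn)))
  apply Summable.of_nonneg_of_le (fun n => Real.rpow_nonneg (jap_pos n).le _) _ hg
  · intro n
    by_cases hn : n = 0
    · subst hn
      simp [jap, Real.zero_rpow (by linarith : -r ≠ 0), Real.one_rpow]
    · rw [if_neg hn, add_zero]
      have h0 : (0:ℝ) < |(n:ℝ)| := by
        simp only [abs_pos, ne_eq, Int.cast_eq_zero]; exact hn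
      exact Real.rpow_le_rpow_of_nonpos h0 (abs_le_jap n) (by linarith)

lemma key_step {p q : ℝ} (hq : 1 ≤ q) (hpq : p = q + 1) {k : ℕ} (hk : 1 ≤ k) :
    (k:ℝ) ^ (-p) ≤ 2 ^ p / q * ((k:ℝ) ^ (-q) - ((k:ℝ) + 1) ^ (-q)) := by
  have hK : (1:ℝ) ≤ (k:ℝ) := by exact_mod_cast hk
  have hK0 : (0:ℝ) < (k:ℝ) := by linarith
  set K := (k:ℝ) with hKdef
  have hK1 : (0:ℝ) < K + 1 := by linarith
  have hq0 : (0:ℝ) < q := by linarith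
  -- Bernoulli
  have hbern : 1 + q / (K + 1) ≤ ((K + 1) / K) ^ q := by
    have h2 : 1 + q * (1 / K) ≤ (1 + 1 / K) ^ q :=
      one_add_mul_self_le_rpow_one_add (le_trans (by norm_num : (-1:ℝ) ≤ 0) (by positivity)) hq
    have h3 : q / (K + 1) ≤ q * (1 / K) := by
      rw [mul_one_div]
      apply div_le_div_of_nonneg_left hq0.le hK0 (by linarith)
    have h4 : (K + 1) / K = 1 + 1 / K := by field_simp
    rw [h4]; linarith
  have e2 : (0:ℝ) < (K+1) ^ q := Real.rpow_pos_of_pos hK1 q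
  have e1 : (0:ℝ) < K ^ q := Real.rpow_pos_of_pos hK0 q
  have h3 : K ^ (-q) = (K+1) ^ (-q) * (((K+1)/K) ^ q) := by
    rw [Real.div_rpow hK1.le hK0.le, Real.rpow_neg hK1.le, Real.rpow_neg hK0.le]
    field_simp
  have hsplit : (K+1) ^ (-p) = (K+1) ^ (-q) * ((K+1))⁻¹ := by
    rw [hpq, show -(q+1) = -q + -1 by ring, Real.rpow_add hK1, Real.rpow_neg_one]
  have h4 : (K+1) ^ (-q) + q * (K+1) ^ (-p) ≤ K ^ (-q) := by
    rw [h3]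
    have := mul_le_mul_of_nonneg_left hbern (Real.rpow_nonneg hK1.le (-q))
    rw [hsplit]
    have hexp : (K+1) ^ (-q) * (1 + q / (K + 1)) =
        (K+1) ^ (-q) + q * ((K+1) ^ (-q) * (K+1)⁻¹) := by
      field_simp
    nlinarith
  have h5 : (2:ℝ) ^ (-p) * K ^ (-p) ≤ (K+1) ^ (-p) := by
    rw [← Real.mul_rpow (by norm_num) hK0.le]
    exact Real.rpow_le_rpow_of_nonpos hK1 (by linarith) (by linarith)
  have h2p : (0:ℝ) < (2:ℝ) ^ p := Real.rpow_pos_of_pos two_pos p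
  have h2pn : (2:ℝ) ^ (-p) = ((2:ℝ) ^ p)⁻¹ := Real.rpow_neg (by norm_num) p
  have hfin : q * ((2:ℝ)^p)⁻¹ * K ^ (-p) ≤ K ^ (-q) - (K+1) ^ (-q) := by
    rw [← h2pn]
    nlinarith
  calc (K:ℝ) ^ (-p) = 2 ^ p / q * (q * ((2:ℝ)^p)⁻¹ * K ^ (-p)) := by
        field_simp
    _ ≤ 2 ^ p / q * (K ^ (-q) - (K+1) ^ (-q)) :=
        mul_le_mul_of_nonneg_left hfin (by positivity)

lemma nat_sum_bound {p q : ℝ} (hq : 1 ≤ q) (hpq : p = q + 1) {M : ℕ} (hM : 1 ≤ M)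
    (G : Finset ℕ) :
    ∑ k ∈ G, (if M ≤ k then (k:ℝ) ^ (-p) else 0) ≤ 2 ^ p / q * (M:ℝ) ^ (-q) := by
  obtain ⟨N, hN⟩ := G.exists_nat_subset_range
  set B := (2:ℝ) ^ p / q with hB
  have hq0 : (0:ℝ) < q := by linarith
  have hB0 : (0:ℝ) ≤ B := by rw [hB]; positivity
  set g : ℕ → ℝ := fun k => ((max M k : ℕ):ℝ) ^ (-q) with hg
  have hstep : ∀ k : ℕ, (if M ≤ k then (k:ℝ) ^ (-p) else 0) ≤ B * (g k - g (k+1)) := by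
    intro k
    by_cases hk : M ≤ k
    · rw [if_pos hk]
      have h1 : max M k = k := max_eq_right hk
      have h2 : max M (k+1) = k+1 := max_eq_right (by omega)
      simp only [hg, h1, h2]
      push_cast
      exact key_step hq hpq (le_trans hM hk)
    · rw [if_neg hk]
      have h1 : max M k = M := max_eq_left (by omega)
      have h2 : max M (k+1) = M := max_eq_left (by omega)
      simp only [hg]
      rw [h1, h2, sub_self, mul_zero]
  calc ∑ k ∈ G, (if M ≤ k then (k:ℝ) ^ (-p) else 0)
      ≤ ∑ k ∈ Finset.range N, (if M ≤ k then (k:ℝ) ^ (-p) else 0) := by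
        apply Finset.sum_le_sum_of_subset_of_nonneg hN
        intro i _ _
        split_ifs
        · positivity
        · exact le_rfl
    _ ≤ ∑ k ∈ Finset.range N, B * (g k - g (k+1)) :=
        Finset.sum_le_sum (fun i _ => hstep i)
    _ = B * (g 0 - g N) := by rw [← Finset.mul_sum, Finset.sum_range_sub' g]
    _ ≤ B * (M:ℝ) ^ (-q) := by
        have h0 : g 0 = (M:ℝ) ^ (-q) := by simp [hg]
        have h1 : 0 ≤ g N := Real.rpow_nonneg (Nat.cast_nonneg _) _
        nlinarith

lemma tail_bound {p q : ℝ} (hq : 1 ≤ q) (hpq : p = q + 1) {M : ℕ} (hM : 1 ≤ M) :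
    ∑' n : ℤ, (if (M:ℤ) ≤ |n| then jap n ^ (-p) else 0)
      ≤ 2 * (2 ^ p / q) * (2 ^ (q / 2) * jap (M:ℤ) ^ (-q)) := by
  have hp1 : (1:ℝ) < p := by linarith
  set f : ℤ → ℝ := fun n => if (M:ℤ) ≤ |n| then jap n ^ (-p) else 0 with hfdef
  have hfnn : ∀ n, 0 ≤ f n := by
    intro n; rw [hfdef]; dsimp only; split_ifs
    · exact Real.rpow_nonneg (jap_pos n).le _
    · exact le_rfl
  have hf : Summable f := by
    apply Summable.of_nonneg_of_le hfnn _ (jap_summable hp1)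
    intro n; rw [hfdef]; dsimp only; split_ifs
    · exact le_rfl
    · exact Real.rpow_nonneg (jap_pos n).le _
  apply Summable.tsum_le_of_sum_le hf
  intro F
  set h : ℕ → ℝ := fun k => if M ≤ k then (k:ℝ) ^ (-p) else 0 with hhdef
  have hhnn : ∀ k, 0 ≤ h k := by
    intro k; rw [hhdef]; dsimp only; split_ifs
    · positivity
    · exact le_rfl
  have hpt : ∀ n : ℤ, f n ≤ h n.natAbs := by
    intro n
    rw [hfdef, hhdef]; dsimp only
    by_cases hn : (M:ℤ) ≤ |n|
    · have hn' : M ≤ n.natAbs := by rw [Int.abs_eq_natAbs] at hn; exact_mod_cast hn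
      rw [if_pos hn, if_pos hn']
      have hpos : (0:ℝ) < (n.natAbs : ℝ) := by
        have : 1 ≤ n.natAbs := le_trans hM hn'
        exact_mod_cast Nat.lt_of_lt_of_le Nat.zero_lt_one this
      apply Real.rpow_le_rpow_of_nonpos hpos _ (by linarith)
      calc ((n.natAbs : ℝ)) = |(n:ℝ)| := by
            rw [Nat.cast_natAbs]; push_cast; ring
        _ ≤ jap n := abs_le_jap n
    · rw [if_neg hn]
      split_ifs
      · positivity
      · exact le_rfl
  have hsum2 : ∑ n ∈ F, f n ≤ ∑ n ∈ F, h n.natAbs := Finset.sum_le_sum (fun n _ => hpt n)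
  -- split into positive and nonpositive parts
  have hsplit : ∑ n ∈ F, h n.natAbs =
      ∑ n ∈ F.filter (fun n => 0 < n), h n.natAbs
        + ∑ n ∈ F.filter (fun n => ¬ 0 < n), h n.natAbs :=
    (Finset.sum_filter_add_sum_filter_not F _ _).symm
  have himg : ∀ (S : Finset ℤ), (∀ x ∈ S, ∀ y ∈ S, x.natAbs = y.natAbs → x = y) →
      ∑ n ∈ S, h n.natAbs ≤ 2 ^ p / q * (M:ℝ) ^ (-q) := by
    intro S hinj
    rw [← Finset.sum_image hinj]
    exact nat_sum_bound hq hpq hM _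
  have h1 := himg (F.filter (fun n => 0 < n)) (by
    intro x hx y hy hxy
    simp only [Finset.mem_filter] at hx hy
    omega)
  have h2 := himg (F.filter (fun n => ¬ 0 < n)) (by
    intro x hx y hy hxy
    simp only [Finset.mem_filter] at hx hy
    omega)
  -- M^(-q) ≤ 2^(q/2) * jap M ^ (-q)
  have hMR : (1:ℝ) ≤ (M:ℝ) := by exact_mod_cast hM
  have hjapM : jap (M:ℤ) ≤ Real.sqrt 2 * (M:ℝ) := by
    rw [jap]
    have : ((M:ℤ):ℝ) = (M:ℝ) := by push_cast; ring
    rw [this]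
    calc Real.sqrt (1 + (M:ℝ)^2) ≤ Real.sqrt (2 * (M:ℝ)^2) :=
          Real.sqrt_le_sqrt (by nlinarith)
      _ = Real.sqrt 2 * (M:ℝ) := by
          rw [Real.sqrt_mul (by norm_num), Real.sqrt_sq (by linarith)]
  have hstep1 : (Real.sqrt 2 * (M:ℝ)) ^ (-q) ≤ jap (M:ℤ) ^ (-q) :=
    Real.rpow_le_rpow_of_nonpos (jap_pos _) hjapM (by linarith)
  have hsq : Real.sqrt 2 = (2:ℝ) ^ ((1:ℝ)/2) := Real.sqrt_eq_rpow 2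
  have hmulr : (Real.sqrt 2 * (M:ℝ)) ^ (-q) = (2:ℝ) ^ (-(q/2)) * (M:ℝ) ^ (-q) := by
    rw [Real.mul_rpow (Real.sqrt_nonneg 2) (Nat.cast_nonneg M), hsq,
      ← Real.rpow_mul (by norm_num), show (1:ℝ)/2 * -q = -(q/2) by ring]
  have hone : (2:ℝ) ^ (q/2) * (2:ℝ) ^ (-(q/2)) = 1 := by
    rw [← Real.rpow_add (by norm_num)]; norm_num
  have hMq : (M:ℝ) ^ (-q) ≤ 2 ^ (q/2) * jap (M:ℤ) ^ (-q) := by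
    have h2q : (0:ℝ) ≤ (2:ℝ) ^ (q/2) := by positivity
    calc (M:ℝ) ^ (-q) = 2 ^ (q/2) * ((2:ℝ) ^ (-(q/2)) * (M:ℝ) ^ (-q)) := by
          rw [← mul_assoc, hone, one_mul]
      _ ≤ 2 ^ (q/2) * jap (M:ℤ) ^ (-q) := by
          apply mul_le_mul_of_nonneg_left _ h2q
          rw [← hmulr]; exact hstep1
  have hBq : (0:ℝ) ≤ 2 ^ p / q := by positivity
  calc ∑ n ∈ F, f n ≤ ∑ n ∈ F, h n.natAbs := hsum2
    _ = ∑ n ∈ F.filter (fun n => 0 < n), h n.natAbs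
        + ∑ n ∈ F.filter (fun n => ¬ 0 < n), h n.natAbs := hsplit
    _ ≤ 2 ^ p / q * (M:ℝ) ^ (-q) + 2 ^ p / q * (M:ℝ) ^ (-q) := add_le_add h1 h2
    _ = 2 * (2 ^ p / q) * (M:ℝ) ^ (-q) := by ring
    _ ≤ 2 * (2 ^ p / q) * (2 ^ (q/2) * jap (M:ℤ) ^ (-q)) := by
        apply mul_le_mul_of_nonneg_left hMq (by positivity)

/-- Convolution estimates with exponents `2s+1` and `1`, for `s > 1/2`. -/
theorem statement7 (s : ℝ) (hs : 1 / 2 < s) :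
    ∃ c > 0, ∀ (m : ℤ) (M : ℕ),
      (∑' n : ℤ, jap n ^ (-(2 * s + 1)) * jap (m - n) ^ (-(1 : ℝ))
          ≤ c * jap m ^ (-(1 : ℝ))) ∧
      (∑' n : ℤ, (if (M : ℤ) ≤ |n| then
            jap n ^ (-(2 * s + 1)) * jap (m - n) ^ (-(1 : ℝ)) else 0)
          ≤ c * jap m ^ (-(1 : ℝ)) *
            ((if 2 * (M : ℝ) / 3 ≤ |(m : ℝ)| then (1 : ℝ) else 0)
              + jap (M : ℤ) ^ (-(2 * s)))) := by
  have h2s : (1:ℝ) < 2 * s := by linarith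
  have hsig : Summable (fun n : ℤ => jap n ^ (-(2*s))) := jap_summable h2s
  set S := ∑' n : ℤ, jap n ^ (-(2*s)) with hSdef
  have hS0 : 0 ≤ S := tsum_nonneg (fun n => Real.rpow_nonneg (jap_pos n).le _)
  set q : ℝ := 2*s+1 with hqdef
  set p : ℝ := 2*s+2 with hpdef
  have hq1 : (1:ℝ) ≤ q := by rw [hqdef]; linarith
  have hq0 : (0:ℝ) < q := by linarith
  have hpq : p = q + 1 := by rw [hpdef, hqdef]; ring
  have hp1 : (1:ℝ) < p := by linarith
  set C₂ : ℝ := 2 * (2 ^ p / q) * 2 ^ (q/2) with hC2def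
  have hC2pos : 0 < C₂ := by rw [hC2def]; positivity
  have hsqrt2 : (0:ℝ) ≤ Real.sqrt 2 := Real.sqrt_nonneg 2
  set c : ℝ := Real.sqrt 2 * S + 3 * C₂ + 1 with hcdef
  have hcpos : 0 < c := by rw [hcdef]; nlinarith
  have hc1 : Real.sqrt 2 * S ≤ c := by rw [hcdef]; nlinarith
  have hc2 : 3 * C₂ ≤ c := by rw [hcdef]; nlinarith
  refine ⟨c, hcpos, fun m M => ?_⟩
  -- pointwise Peetre bound
  have hterm_nn : ∀ n : ℤ, 0 ≤ jap n ^ (-(2*s+1)) * jap (m - n) ^ (-(1:ℝ)) :=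
    fun n => mul_nonneg (Real.rpow_nonneg (jap_pos n).le _)
      (Real.rpow_nonneg (jap_pos _).le _)
  have hterm_le : ∀ n : ℤ, jap n ^ (-(2*s+1)) * jap (m - n) ^ (-(1:ℝ))
      ≤ Real.sqrt 2 * (jap m)⁻¹ * jap n ^ (-(2*s)) := by
    intro n
    have hm := jap_pos m
    have hn := jap_pos n
    have hmn := jap_pos (m - n)
    have key : (jap n)⁻¹ * (jap (m - n))⁻¹ ≤ Real.sqrt 2 * (jap m)⁻¹ := by
      have hdiv : jap m / Real.sqrt 2 ≤ jap n * jap (m - n) := by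
        rw [div_le_iff₀ (by positivity)]
        nlinarith [peetre m n]
      calc (jap n)⁻¹ * (jap (m - n))⁻¹ = (jap n * jap (m - n))⁻¹ := (mul_inv _ _).symm
        _ ≤ (jap m / Real.sqrt 2)⁻¹ := inv_anti₀ (by positivity) hdiv
        _ = Real.sqrt 2 * (jap m)⁻¹ := by rw [inv_div, div_eq_mul_inv]
    have hsplitn : jap n ^ (-(2*s+1)) = jap n ^ (-(2*s)) * (jap n)⁻¹ := by
      rw [show -(2*s+1) = -(2*s) + (-1) by ring, Real.rpow_add hn, Real.rpow_neg_one]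
    calc jap n ^ (-(2*s+1)) * jap (m - n) ^ (-(1:ℝ))
        = jap n ^ (-(2*s)) * ((jap n)⁻¹ * (jap (m - n))⁻¹) := by
          rw [hsplitn, Real.rpow_neg_one]; ring
      _ ≤ jap n ^ (-(2*s)) * (Real.sqrt 2 * (jap m)⁻¹) :=
          mul_le_mul_of_nonneg_left key (Real.rpow_nonneg hn.le _)
      _ = Real.sqrt 2 * (jap m)⁻¹ * jap n ^ (-(2*s)) := by ring
  have hsum_term : Summable (fun n : ℤ => jap n ^ (-(2*s+1)) * jap (m - n) ^ (-(1:ℝ))) :=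
    Summable.of_nonneg_of_le hterm_nn hterm_le (hsig.mul_left _)
  have hA : ∑' n : ℤ, jap n ^ (-(2*s+1)) * jap (m - n) ^ (-(1:ℝ))
      ≤ Real.sqrt 2 * S * jap m ^ (-(1:ℝ)) := by
    calc ∑' n : ℤ, jap n ^ (-(2*s+1)) * jap (m - n) ^ (-(1:ℝ))
        ≤ ∑' n : ℤ, Real.sqrt 2 * (jap m)⁻¹ * jap n ^ (-(2*s)) :=
          Summable.tsum_le_tsum hterm_le hsum_term (hsig.mul_left _)
      _ = Real.sqrt 2 * (jap m)⁻¹ * S := tsum_mul_left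
      _ = Real.sqrt 2 * S * jap m ^ (-(1:ℝ)) := by rw [Real.rpow_neg_one]; ring
  have hrm : (0:ℝ) ≤ jap m ^ (-(1:ℝ)) := Real.rpow_nonneg (jap_pos m).le _
  have hpartA : ∑' n : ℤ, jap n ^ (-(2*s+1)) * jap (m - n) ^ (-(1:ℝ))
      ≤ c * jap m ^ (-(1:ℝ)) :=
    le_trans hA (mul_le_mul_of_nonneg_right hc1 hrm)
  constructor
  · exact hpartA
  -- part (b)
  have hTnn : ∀ n : ℤ, 0 ≤ (if (M:ℤ) ≤ |n| then
      jap n ^ (-(2*s+1)) * jap (m - n) ^ (-(1:ℝ)) else 0) := by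
    intro n; split_ifs
    · exact hterm_nn n
    · exact le_rfl
  have hTle : ∀ n : ℤ, (if (M:ℤ) ≤ |n| then
      jap n ^ (-(2*s+1)) * jap (m - n) ^ (-(1:ℝ)) else 0)
      ≤ jap n ^ (-(2*s+1)) * jap (m - n) ^ (-(1:ℝ)) := by
    intro n; split_ifs
    · exact le_rfl
    · exact hterm_nn n
  have hTsum : Summable (fun n : ℤ => (if (M:ℤ) ≤ |n| then
      jap n ^ (-(2*s+1)) * jap (m - n) ^ (-(1:ℝ)) else 0)) :=
    Summable.of_nonneg_of_le hTnn hTle hsum_term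
  by_cases hcase : 2 * (M:ℝ) / 3 ≤ |(m:ℝ)|
  · rw [if_pos hcase]
    have h1 : ∑' n : ℤ, (if (M:ℤ) ≤ |n| then
        jap n ^ (-(2*s+1)) * jap (m - n) ^ (-(1:ℝ)) else 0)
        ≤ ∑' n : ℤ, jap n ^ (-(2*s+1)) * jap (m - n) ^ (-(1:ℝ)) :=
      Summable.tsum_le_tsum hTle hTsum hsum_term
    have e2 : (1:ℝ) ≤ 1 + jap (M:ℤ) ^ (-(2*s)) :=
      le_add_of_nonneg_right (Real.rpow_nonneg (jap_pos _).le _)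
    have h3 : c * jap m ^ (-(1:ℝ)) ≤ c * jap m ^ (-(1:ℝ)) * (1 + jap (M:ℤ) ^ (-(2*s))) := by
      nth_rewrite 1 [← mul_one (c * jap m ^ (-(1:ℝ)))]
      exact mul_le_mul_of_nonneg_left e2 (by positivity)
    linarith [h1.trans hpartA]
  · rw [if_neg hcase, zero_add]
    have hm_lt : |(m:ℝ)| < 2 * (M:ℝ) / 3 := not_le.mp hcase
    have hM1 : 1 ≤ M := by
      rcases Nat.eq_zero_or_pos M with h0 | h
      · subst h0; simp at hm_lt; linarith [abs_nonneg (m:ℝ)]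
      · exact h
    have hMR1 : (1:ℝ) ≤ (M:ℝ) := by exact_mod_cast hM1
    -- pointwise bound in the far regime
    have hpt : ∀ n : ℤ, (if (M:ℤ) ≤ |n| then
        jap n ^ (-(2*s+1)) * jap (m - n) ^ (-(1:ℝ)) else 0)
        ≤ 3 * (if (M:ℤ) ≤ |n| then jap n ^ (-p) else 0) := by
      intro n
      by_cases hn : (M:ℤ) ≤ |n|
      · rw [if_pos hn, if_pos hn]
        have hnR : (M:ℝ) ≤ |(n:ℝ)| := by
          rw [← Int.cast_abs]; exact_mod_cast hn
        have habs : |(n:ℝ)| / 3 ≤ |(m:ℝ) - (n:ℝ)| := by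
          have h1 : |(n:ℝ)| - |(m:ℝ)| ≤ |(n:ℝ) - (m:ℝ)| := abs_sub_abs_le_abs_sub _ _
          rw [abs_sub_comm] at h1
          linarith
        have hj : jap n / 3 ≤ jap (m - n) := by
          have hsqrt9 : Real.sqrt 9 = 3 := by
            rw [show (9:ℝ) = 3^2 by norm_num, Real.sqrt_sq (by norm_num)]
          have h9 : Real.sqrt ((1 + (n:ℝ)^2)/9) = jap n / 3 := by
            rw [Real.sqrt_div (by positivity) 9, hsqrt9, jap]
          rw [← h9, jap]
          apply Real.sqrt_le_sqrt
          push_cast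
          have habs2 : (|(n:ℝ)|/3)^2 ≤ ((m:ℝ) - (n:ℝ))^2 := by
            rw [← sq_abs ((m:ℝ) - (n:ℝ))]
            exact pow_le_pow_left₀ (by positivity) habs 2
          nlinarith [sq_abs ((n:ℝ))]
        have hmn := jap_pos (m - n)
        have hn3 : (0:ℝ) < jap n / 3 := by have := jap_pos n; linarith
        have hinv : (jap (m - n))⁻¹ ≤ 3 * (jap n)⁻¹ := by
          calc (jap (m - n))⁻¹ ≤ (jap n / 3)⁻¹ := inv_anti₀ hn3 hj
            _ = 3 * (jap n)⁻¹ := by rw [inv_div, div_eq_mul_inv]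
        have hsplitp : jap n ^ (-p) = jap n ^ (-(2*s+1)) * (jap n)⁻¹ := by
          rw [hpdef, show -(2*s+2) = -(2*s+1) + (-1) by ring,
            Real.rpow_add (jap_pos n), Real.rpow_neg_one]
        calc jap n ^ (-(2*s+1)) * jap (m - n) ^ (-(1:ℝ))
            = jap n ^ (-(2*s+1)) * (jap (m - n))⁻¹ := by rw [Real.rpow_neg_one]
          _ ≤ jap n ^ (-(2*s+1)) * (3 * (jap n)⁻¹) :=
              mul_le_mul_of_nonneg_left hinv (Real.rpow_nonneg (jap_pos n).le _)
          _ = 3 * jap n ^ (-p) := by rw [hsplitp]; ring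
      · rw [if_neg hn, if_neg hn, mul_zero]
    have hUnn : ∀ n : ℤ, 0 ≤ (if (M:ℤ) ≤ |n| then jap n ^ (-p) else 0) := by
      intro n; split_ifs
      · exact Real.rpow_nonneg (jap_pos n).le _
      · exact le_rfl
    have hUsum : Summable (fun n : ℤ => (if (M:ℤ) ≤ |n| then jap n ^ (-p) else 0)) := by
      apply Summable.of_nonneg_of_le hUnn _ (jap_summable hp1)
      intro n; split_ifs
      · exact le_rfl
      · exact Real.rpow_nonneg (jap_pos n).le _
    have hstep : ∑' n : ℤ, (if (M:ℤ) ≤ |n| then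
        jap n ^ (-(2*s+1)) * jap (m - n) ^ (-(1:ℝ)) else 0)
        ≤ 3 * ∑' n : ℤ, (if (M:ℤ) ≤ |n| then jap n ^ (-p) else 0) := by
      calc ∑' n : ℤ, (if (M:ℤ) ≤ |n| then
            jap n ^ (-(2*s+1)) * jap (m - n) ^ (-(1:ℝ)) else 0)
          ≤ ∑' n : ℤ, 3 * (if (M:ℤ) ≤ |n| then jap n ^ (-p) else 0) :=
            Summable.tsum_le_tsum hpt hTsum (hUsum.mul_left 3)
        _ = 3 * ∑' n : ℤ, (if (M:ℤ) ≤ |n| then jap n ^ (-p) else 0) := tsum_mul_left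
    have htail := tail_bound hq1 hpq hM1
    have hC2eq : 2 * (2 ^ p / q) * (2 ^ (q/2) * jap (M:ℤ) ^ (-q)) = C₂ * jap (M:ℤ) ^ (-q) := by
      rw [hC2def]; ring
    have hjm : jap m ≤ jap (M:ℤ) := by
      apply jap_mono
      have : |((M:ℤ):ℝ)| = (M:ℝ) := by
        rw [abs_of_nonneg (by positivity)]; push_cast; ring
      rw [this]; linarith
    have hjminv : (jap (M:ℤ))⁻¹ ≤ (jap m)⁻¹ := inv_anti₀ (jap_pos m) hjm
    have hqsplit : jap (M:ℤ) ^ (-q) = jap (M:ℤ) ^ (-(2*s)) * (jap (M:ℤ))⁻¹ := by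
      rw [hqdef, show -(2*s+1) = -(2*s) + (-1) by ring,
        Real.rpow_add (jap_pos _), Real.rpow_neg_one]
    have hfinal : 3 * (C₂ * jap (M:ℤ) ^ (-q)) ≤ c * jap m ^ (-(1:ℝ)) * jap (M:ℤ) ^ (-(2*s)) := by
      rw [hqsplit, Real.rpow_neg_one]
      have ha : (0:ℝ) ≤ jap (M:ℤ) ^ (-(2*s)) := Real.rpow_nonneg (jap_pos _).le _
      have hb : (0:ℝ) ≤ (jap (M:ℤ))⁻¹ := inv_nonneg.mpr (jap_pos _).le
      have hb' : (0:ℝ) ≤ (jap m)⁻¹ := inv_nonneg.mpr (jap_pos _).le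
      calc 3 * (C₂ * (jap (M:ℤ) ^ (-(2*s)) * (jap (M:ℤ))⁻¹))
          = (3 * C₂) * (jap (M:ℤ) ^ (-(2*s)) * (jap (M:ℤ))⁻¹) := by ring
        _ ≤ c * (jap (M:ℤ) ^ (-(2*s)) * (jap m)⁻¹) := by
            apply mul_le_mul hc2 _ (by positivity) hcpos.le
            exact mul_le_mul_of_nonneg_left hjminv ha
        _ = c * (jap m)⁻¹ * jap (M:ℤ) ^ (-(2*s)) := by ring
    calc ∑' n : ℤ, (if (M:ℤ) ≤ |n| then
          jap n ^ (-(2*s+1)) * jap (m - n) ^ (-(1:ℝ)) else 0)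
        ≤ 3 * ∑' n : ℤ, (if (M:ℤ) ≤ |n| then jap n ^ (-p) else 0) := hstep
      _ ≤ 3 * (C₂ * jap (M:ℤ) ^ (-q)) := by
          apply mul_le_mul_of_nonneg_left _ (by norm_num)
          rw [← hC2eq]; exact htail
      _ ≤ c * jap m ^ (-(1:ℝ)) * jap (M:ℤ) ^ (-(2*s)) := hfinal
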